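/- Let s₁ and s₂ be strings of length n admitting a common partition of size m. Then there exists a finite set T of blocks of (s₁, s₂), each of length t_b ≥ 2, such that any two distinct blocks in T do not overlap and m = n − Σ_{b∈T}(t_b − 1). -/

import Mathlib

/-- A common partition of strings `s₁` and `s₂`: a multiset of nonempty strings
(represented by the two orderings `P₁`, `P₂`, which are permutations of each other)
whose concatenations are `s₁` and `s₂` respectively. -/
def CommonPartition {α : Type*} (s₁ s₂ : List α) (P₁ P₂ : List (List α)) : Prop :=
  P₁.Perm P₂ ∧ (∀ p ∈ P₁, p ≠ []) ∧ P₁.flatten = s₁ ∧ P₂.flatten = s₂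

/-- A block of the pair of strings `(s₁, s₂)`: a triple `(k¹, k², t)` with `t ≥ 1`,
`k¹ + t ≤ |s₁|`, `k² + t ≤ |s₂|`, and the substring of `s₁` of length `t` starting at
`k¹` equals the substring of `s₂` of length `t` starting at `k²`. -/
def IsBlock {α : Type*} (s₁ s₂ : List α) (b : ℕ × ℕ × ℕ) : Prop :=
  1 ≤ b.2.2 ∧ b.1 + b.2.2 ≤ s₁.length ∧ b.2.1 + b.2.2 ≤ s₂.length ∧
    (s₁.drop b.1).take b.2.2 = (s₂.drop b.2.1).take b.2.2

/-- Blocks `bᵢ = (kᵢ¹, kᵢ², tᵢ)` and `b_j = (k_j¹, k_j², t_j)` overlap if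
`kᵢ¹ − t_j < k_j¹ < kᵢ¹ + tᵢ` or `kᵢ² − t_j < k_j² < kᵢ² + tᵢ` (over the integers). -/
def Overlap (bi bj : ℕ × ℕ × ℕ) : Prop :=
  ((bi.1 : ℤ) - bj.2.2 < bj.1 ∧ (bj.1 : ℤ) < bi.1 + bi.2.2) ∨
  ((bi.2.1 : ℤ) - bj.2.2 < bj.2.1 ∧ (bj.2.1 : ℤ) < bi.2.1 + bi.2.2)

lemma perm_get_fun {α : Type*} {l₁ l₂ : List α} (h : l₁.Perm l₂) :
    ∃ f : Fin l₁.length → Fin l₂.length, Function.Injective f ∧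
      ∀ i, l₂.get (f i) = l₁.get i := by
  induction h with
  | nil => exact ⟨fun i => i, fun a b h => h, fun i => rfl⟩
  | cons x h ih =>
    obtain ⟨f, hinj, hget⟩ := ih
    simp only [List.length_cons]
    refine ⟨fun i => Fin.cases 0 (fun j => (f j).succ) i, ?_, ?_⟩
    · intro a b hab
      cases a using Fin.cases with
      | zero => cases b using Fin.cases with
        | zero => rfl
        | succ j => exact absurd hab.symm (Fin.succ_ne_zero _)
      | succ i => cases b using Fin.cases with
        | zero => exact absurd hab (Fin.succ_ne_zero _)
        | succ j => simp at hab; exact congrArg Fin.succ (hinj hab)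
    · intro i
      cases i using Fin.cases with
      | zero => rfl
      | succ j => simpa using hget j
  | swap x y l =>
    simp only [List.length_cons]
    refine ⟨Equiv.swap 0 1, (Equiv.swap 0 1).injective, ?_⟩
    intro i
    cases i using Fin.cases with
    | zero => rfl
    | succ j =>
      cases j using Fin.cases with
      | zero => rfl
      | succ k =>
        rw [Equiv.swap_apply_of_ne_of_ne (by simp [Fin.ext_iff]) (by simp [Fin.ext_iff])]
        rfl
  | trans h₁ h₂ ih₁ ih₂ =>
    obtain ⟨f₁, hinj₁, hget₁⟩ := ih₁
    obtain ⟨f₂, hinj₂, hget₂⟩ := ih₂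
    exact ⟨f₂ ∘ f₁, hinj₂.comp hinj₁, fun i => (hget₂ (f₁ i)).trans (hget₁ i)⟩

lemma sum_take_mono (L : List ℕ) {a b : ℕ} (h : a ≤ b) : (L.take a).sum ≤ (L.take b).sum := by
  conv_rhs => rw [← List.take_append_drop a (L.take b)]
  rw [List.take_take, min_eq_left h, List.sum_append]
  omega

lemma off_succ {α : Type*} (P : List (List α)) (i : ℕ) (h : i < P.length) :
    ((P.map List.length).take (i+1)).sum = ((P.map List.length).take i).sum + P[i].length := by
  have := List.sum_take_succ (P.map List.length) i (by simpa)
  simpa using this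

lemma off_add_le {α : Type*} (P : List (List α)) {i j : ℕ} (hi : i < P.length) (hij : i < j) :
    ((P.map List.length).take i).sum + P[i].length ≤ ((P.map List.length).take j).sum := by
  rw [← off_succ P i hi]
  exact sum_take_mono _ hij

lemma off_le_total {α : Type*} (P : List (List α)) (i : ℕ) (hi : i < P.length) :
    ((P.map List.length).take i).sum + P[i].length ≤ P.flatten.length := by
  have := off_add_le P hi (Nat.lt_succ_self i)
  calc _ ≤ ((P.map List.length).take (i+1)).sum := this
    _ ≤ ((P.map List.length).take P.length).sum := sum_take_mono _ hi
    _ = P.flatten.length := by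
        rw [show P.length = (P.map List.length).length by simp, List.take_length,
          List.length_flatten]

lemma flatten_drop_take {α : Type*} (P : List (List α)) (i : ℕ) (h : i < P.length) :
    (P.flatten.drop (((P.map List.length).take i).sum)).take P[i].length = P[i] := by
  have h3 : P.flatten = (P.take i).flatten ++ (P[i] ++ (P.drop (i+1)).flatten) := by
    conv_lhs => rw [← List.take_append_drop i P]
    rw [List.flatten_append, List.drop_eq_getElem_cons h, List.flatten_cons]
  rw [h3, show ((P.map List.length).take i).sum = (P.take i).flatten.length by
    rw [List.length_flatten, List.map_take], List.drop_left, List.take_left]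


/-- From a common partition of size `m` of strings of length `n`, one obtains a set `T`
of pairwise non-overlapping blocks, each of length at least `2`, with
`m = n − Σ_{b∈T} (t_b − 1)`. -/
theorem blocks_of_commonPartition {α : Type*} (s₁ s₂ : List α) (n m : ℕ)
    (h₁ : s₁.length = n) (h₂ : s₂.length = n)
    (P₁ P₂ : List (List α)) (hP : CommonPartition s₁ s₂ P₁ P₂) (hm : P₁.length = m) :
    ∃ T : Finset (ℕ × ℕ × ℕ),
      (∀ b ∈ T, IsBlock s₁ s₂ b ∧ 2 ≤ b.2.2) ∧
      (∀ b ∈ T, ∀ b' ∈ T, b ≠ b' → ¬ Overlap b b') ∧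
      m = n - ∑ b ∈ T, (b.2.2 - 1) := by
  obtain ⟨hperm, hne, hf1, hf2⟩ := hP
  obtain ⟨f, hfinj, hfget⟩ := perm_get_fun hperm
  set o₁ : ℕ → ℕ := fun k => ((P₁.map List.length).take k).sum with ho₁
  set o₂ : ℕ → ℕ := fun k => ((P₂.map List.length).take k).sum with ho₂
  set blk : Fin P₁.length → ℕ × ℕ × ℕ :=
    fun i => (o₁ i, o₂ (f i), (P₁.get i).length) with hblk
  set T : Finset (ℕ × ℕ × ℕ) :=
    (Finset.univ.filter fun i : Fin P₁.length => 2 ≤ (P₁.get i).length).image blk with hT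
  have hlen2 : ∀ i : Fin P₁.length, (P₂.get (f i)).length = (P₁.get i).length := by
    intro i; rw [hfget]
  -- blk i ∈ intervals separation
  have hsep₁ : ∀ i j : Fin P₁.length, i < j → o₁ i + (P₁.get i).length ≤ o₁ j :=
    fun i j hij => off_add_le P₁ i.isLt hij
  have hsep₂ : ∀ i j : Fin P₁.length, f i < f j →
      o₂ (f i) + (P₁.get i).length ≤ o₂ (f j) := by
    intro i j hij
    rw [← hlen2 i]
    exact off_add_le P₂ (f i).isLt hij
  have hpos : ∀ i : Fin P₁.length, 1 ≤ (P₁.get i).length := by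
    intro i
    have : P₁[(i:ℕ)] ≠ [] := hne _ (List.getElem_mem i.isLt)
    exact Nat.one_le_iff_ne_zero.mpr (by simpa using this)
  have hblkinj : Function.Injective blk := by
    intro i j hij
    by_contra hne'
    rcases lt_or_gt_of_ne hne' with h | h
    · have := hsep₁ i j h
      have h0 : o₁ i = o₁ j := congrArg Prod.fst hij
      have := hpos i; omega
    · have := hsep₁ j i h
      have h0 : o₁ i = o₁ j := congrArg Prod.fst hij
      have := hpos j; omega
  refine ⟨T, ?_, ?_, ?_⟩
  · intro b hb
    simp only [hT, Finset.mem_image, Finset.mem_filter, Finset.mem_univ, true_and] at hb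
    obtain ⟨i, h2, rfl⟩ := hb
    refine ⟨⟨hpos i, ?_, ?_, ?_⟩, h2⟩
    · have := off_le_total P₁ i i.isLt
      simpa [← h₁, ← hf1, List.get_eq_getElem, hblk, ho₁] using this
    · show o₂ (f i) + (P₁.get i).length ≤ s₂.length
      have h5 := off_le_total P₂ (f i) (f i).isLt
      rw [show P₂[((f i):ℕ)].length = (P₁.get i).length by
        rw [← List.get_eq_getElem]; exact hlen2 i] at h5
      rw [← hf2]
      exact h5
    · show (s₁.drop (o₁ i)).take (P₁.get i).length = (s₂.drop (o₂ (f i))).take (P₁.get i).length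
      rw [← hf1, ← hf2]
      have e₁ : (P₁.flatten.drop (o₁ i)).take (P₁.get i).length = P₁.get i := by
        simpa using flatten_drop_take P₁ i i.isLt
      have e₂ : (P₂.flatten.drop (o₂ (f i))).take (P₁.get i).length = P₁.get i := by
        have h6 := flatten_drop_take P₂ (f i) (f i).isLt
        rw [← List.get_eq_getElem, hfget] at h6
        exact h6
      rw [e₁, e₂]
  · intro b hb b' hb' hne' hov
    simp only [hT, Finset.mem_image, Finset.mem_filter, Finset.mem_univ, true_and] at hb hb'
    obtain ⟨i, h2i, rfl⟩ := hb
    obtain ⟨j, h2j, rfl⟩ := hb'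
    have hij : i ≠ j := fun h => hne' (by rw [h])
    rcases hov with ⟨ha, hb⟩ | ⟨ha, hb⟩
    · simp only [hblk] at ha hb
      rcases lt_or_gt_of_ne hij with h | h
      · have := hsep₁ i j h
        omega
      · have := hsep₁ j i h
        omega
    · simp only [hblk] at ha hb
      have hfij : f i ≠ f j := fun h => hij (hfinj h)
      rcases lt_or_gt_of_ne hfij with h | h
      · have := hsep₂ i j h
        omega
      · have := hsep₂ j i h
        omega
  · have hsum : ∑ b ∈ T, (b.2.2 - 1) =
        ∑ i ∈ (Finset.univ.filter fun i : Fin P₁.length => 2 ≤ (P₁.get i).length),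
          ((P₁.get i).length - 1) := by
      rw [hT, Finset.sum_image (fun a _ b _ h => hblkinj h)]
    have hsum2 : ∑ i ∈ (Finset.univ.filter fun i : Fin P₁.length => 2 ≤ (P₁.get i).length),
        ((P₁.get i).length - 1) = ∑ i : Fin P₁.length, ((P₁.get i).length - 1) := by
      refine Finset.sum_subset (Finset.filter_subset _ _) ?_
      intro i _ hi
      simp only [Finset.mem_filter, Finset.mem_univ, true_and, not_le] at hi
      have := hpos i; omega
    have hn : n = ∑ i : Fin P₁.length, (P₁.get i).length := by
      have e : P₁.map List.length = List.ofFn (List.length ∘ P₁.get) := by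
        rw [← List.map_ofFn, List.ofFn_get]
      rw [← h₁, ← hf1, List.length_flatten, e, List.sum_ofFn]
      rfl
    have hmn : ∑ i : Fin P₁.length, (P₁.get i).length
        = ∑ i : Fin P₁.length, (((P₁.get i).length - 1) + 1) :=
      Finset.sum_congr rfl fun i _ => by have := hpos i; omega
    rw [Finset.sum_add_distrib] at hmn
    simp only [Finset.sum_const, Finset.card_univ, Fintype.card_fin, smul_eq_mul,
      mul_one] at hmn
    rw [hsum, hsum2]
    omega
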